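/- For every integer n ≥ 1: if n is even then χ(2, 2; n) = 2·(n + 2), and if n is odd then χ(2, 2; n) = 0. (In particular, the degree of the top Chern class of an odd-dimensional smooth complete intersection of two quadrics is zero.) -/
import Mathlib


/-- `hcomplete k d` is the complete homogeneous symmetric polynomial
`h_k(d₁,…,d_r) = ∑_{i₁+⋯+i_r=k} d₁^{i₁}⋯d_r^{i_r}` evaluated at the tuple `d`. -/
def hcomplete {r : ℕ} (k : ℕ) (d : Fin r → ℤ) : ℤ :=
  ∑ f ∈ Finset.Nat.antidiagonalTuple r k, ∏ j, d j ^ f j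

/-- `chi d n = d₁⋯d_r · ∑_{i=0}^{n} (−1)^{n−i} · binom(n+r+1, i) · h_{n−i}(d₁,…,d_r)`,
which by a theorem of Azuma is the degree of the top Chern class of an `n`-dimensional
smooth complete intersection of hypersurfaces of degrees `d₁,…,d_r` in `ℙ^{n+r}`. -/
def chi {r : ℕ} (d : Fin r → ℤ) (n : ℕ) : ℤ :=
  (∏ j, d j) * ∑ i ∈ Finset.range (n + 1),
    (-1) ^ (n - i) * ((n + r + 1).choose i : ℤ) * hcomplete (n - i) d

lemma hc2 (k : ℕ) : hcomplete k ![(2 : ℤ), 2] = (k + 1) * 2 ^ k := by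
  rw [hcomplete, Finset.Nat.antidiagonalTuple_two, Finset.sum_map,
    Finset.Nat.sum_antidiagonal_eq_sum_range_succ_mk]
  have : ∀ p ∈ Finset.range (k+1),
      (∏ j, (![(2:ℤ),2] j) ^ ((piFinTwoEquiv fun _ => ℕ).symm.toEmbedding (p, k - p) j))
      = 2 ^ k := by
    intro p hp
    simp only [Finset.mem_range] at hp
    simp [Fin.prod_univ_two, ← pow_add]
    omega
  rw [Finset.sum_congr rfl this, Finset.sum_const, Finset.card_range]
  ring

lemma sum1 (N : ℕ) : ∑ m ∈ Finset.range (N+1), (N.choose m : ℤ) * (-2)^m = (-1)^N := by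
  have := add_pow (-2 : ℤ) 1 N
  simp only [one_pow, mul_one] at this
  have h : ((-2:ℤ) + 1) ^ N = (-1:ℤ)^N := by norm_num
  rw [h] at this
  rw [this]
  exact Finset.sum_congr rfl fun m _ => by ring

lemma sum2 (N : ℕ) : ∑ m ∈ Finset.range (N+1), (m : ℤ) * (N.choose m : ℤ) * (-2)^m
    = 2 * N * (-1)^N := by
  cases N with
  | zero => simp
  | succ n =>
    rw [Finset.sum_range_succ']
    have key : ∀ j ∈ Finset.range (n+1),
        ((j+1 : ℕ) : ℤ) * ((n+1).choose (j+1) : ℤ) * (-2)^(j+1)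
        = (-2) * (n+1) * ((n.choose j : ℤ) * (-2)^j) := by
      intro j hj
      have h2 : (((n+1).choose (j+1) * (j+1) : ℕ) : ℤ) = (((n+1) * n.choose j : ℕ) : ℤ) := by
        rw [← Nat.add_one_mul_choose_eq n j]
      push_cast at h2
      push_cast
      rw [pow_succ]
      linear_combination (-2 * (-2:ℤ)^j) * h2
    rw [Finset.sum_congr rfl key]
    rw [← Finset.mul_sum, sum1 n]
    push_cast
    ring

lemma sum3 (N : ℕ) : ∑ m ∈ Finset.range (N+1), ((m:ℤ) - 2) * (N.choose m : ℤ) * (-2)^m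
    = (2*N - 2) * (-1)^N := by
  have : ∀ m ∈ Finset.range (N+1), ((m:ℤ) - 2) * (N.choose m : ℤ) * (-2)^m
      = (m:ℤ) * (N.choose m : ℤ) * (-2)^m - 2 * ((N.choose m : ℤ) * (-2)^m) := by
    intro m _; ring
  rw [Finset.sum_congr rfl this, Finset.sum_sub_distrib, ← Finset.mul_sum, sum1, sum2]
  ring

lemma chi_formula (n : ℕ) : chi ![(2:ℤ), 2] n = ((n:ℤ) + 2) * (1 + (-1)^n) := by
  set A : ℤ := ∑ j ∈ Finset.range (n+1),
    (-1:ℤ)^j * (j+1) * 2^j * ((n+3).choose (j+3) : ℤ) with hA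
  have hchi : chi ![(2:ℤ), 2] n = 4 * A := by
    rw [chi]
    have hprod : (∏ j, ![(2:ℤ),2] j) = 4 := by simp [Fin.prod_univ_two]
    rw [hprod]
    congr 1
    have h1 : ∀ i ∈ Finset.range (n+1),
        (-1:ℤ) ^ (n - i) * ((n + 2 + 1).choose i : ℤ) * hcomplete (n - i) ![(2:ℤ),2]
        = (-1:ℤ) ^ (n - i) * (((n-i:ℕ):ℤ)+1) * 2^(n-i) * ((n+3).choose i : ℤ) := by
      intro i hi
      rw [hc2]
      have h : n + 2 + 1 = n + 3 := rfl
      rw [h]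
      ring
    rw [Finset.sum_congr rfl h1, ← Finset.sum_range_reflect]
    apply Finset.sum_congr rfl
    intro j hj
    simp only [Finset.mem_range] at hj
    have hjn : j ≤ n := by omega
    have e1 : n + 1 - 1 - j = n - j := by omega
    rw [e1]
    have e2 : n - (n - j) = j := Nat.sub_sub_self hjn
    have e3 : (n+3).choose (n - j) = (n+3).choose (j+3) := by
      have h : n - j = (n+3) - (j+3) := by omega
      rw [h, Nat.choose_symm (by omega)]
    rw [e2, e3]
  have key : ∑ m ∈ Finset.range (n+4), ((m:ℤ) - 2) * ((n+3).choose m : ℤ) * (-2)^m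
      = -8 * A + (2*(n:ℤ) + 4) := by
    rw [show n+4 = (n+3)+1 from rfl, Finset.sum_range_succ',
        show n+3 = (n+2)+1 from rfl, Finset.sum_range_succ',
        show n+2 = (n+1)+1 from rfl, Finset.sum_range_succ']
    have hterm : ∀ j ∈ Finset.range (n+1),
        ((((j+1+1+1 : ℕ)):ℤ) - 2) * (((n+1+1+1).choose (j+1+1+1)):ℤ) * (-2)^(j+1+1+1)
        = -8 * ((-1:ℤ)^j * (j+1) * 2^j * ((n+3).choose (j+3) : ℤ)) := by
      intro j hj
      have h : (j:ℕ)+1+1+1 = j+3 := rfl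
      have h' : (n:ℕ)+1+1+1 = n+3 := rfl
      rw [h, h']
      rw [show ((-2:ℤ))^(j+3) = (-1)^j * 2^j * (-8) from by
        rw [pow_add, neg_pow]; ring]
      push_cast
      ring
    rw [Finset.sum_congr rfl hterm, ← Finset.mul_sum, ← hA]
    have c0 : (((0:ℕ):ℤ) - 2) * (((n+1+1+1).choose 0):ℤ) * (-2)^(0:ℕ) = -2 := by
      simp
    have c1 : (((0+1:ℕ):ℤ) - 2) * (((n+1+1+1).choose (0+1)):ℤ) * (-2)^(0+1:ℕ) = 2*(n:ℤ)+6 := by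
      simp [Nat.choose_one_right]
      push_cast
      ring
    have c2 : (((0+1+1:ℕ):ℤ) - 2) * (((n+1+1+1).choose (0+1+1)):ℤ) * (-2)^(0+1+1:ℕ) = 0 := by
      norm_num
    rw [c0, c1, c2] <;> ring
  have key2 := sum3 (n+3)
  rw [show (n+3)+1 = n+4 from rfl] at key2
  rw [key] at key2
  have hsign : ((-1:ℤ))^(n+3) = -(-1:ℤ)^n := by
    rw [pow_add]; ring
  rw [hsign] at key2
  push_cast at key2
  have h8 : (8:ℤ) * A = (2*(n:ℤ)+4) * (1 + (-1)^n) := by linear_combination -key2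
  rw [hchi]
  refine mul_left_cancel₀ (two_ne_zero) ?_
  linear_combination h8


/-- For `n ≥ 1`: if `n` is even then `χ(2, 2; n) = 2·(n + 2)`, and if `n` is odd
then `χ(2, 2; n) = 0`. -/
theorem chi_two_quadrics (n : ℕ) (hn : 1 ≤ n) :
    (Even n → chi ![(2 : ℤ), 2] n = 2 * ((n : ℤ) + 2)) ∧
    (Odd n → chi ![(2 : ℤ), 2] n = 0) := by

  constructor
  · intro he
    rw [chi_formula, he.neg_one_pow]
    ring
  · intro ho
    rw [chi_formula, ho.neg_one_pow]
    ring
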